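/- Let F_s = k_s(t), F = K(t) with K = ∏_{s∈S} k_s / D, and let L_s be a (possibly infinite) Galois extension of F_s for D-almost all s. Then the algebraic part L_alg = L ∩ F^alg of the ultraproduct L = ∏_{s∈S} L_s / D is a Galois extension of F. -/

import Mathlib

set_option synthInstance.maxHeartbeats 1000000
set_option maxHeartbeats 1000000

/-- `K` (with surjection `π` from the product) is the ultraproduct of the family `R`
with respect to the ultrafilter `D`. -/
def IsUltraproduct {S : Type*} {R : S → Type*} [∀ s, CommRing (R s)]
    {K : Type*} [CommRing K] (D : Ultrafilter S) (π : (∀ s, R s) →+* K) : Prop :=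
  Function.Surjective π ∧ ∀ f g : ∀ s, R s, π f = π g ↔ {s | f s = g s} ∈ D

open Polynomial

section Basic

variable {S : Type*} {R : S → Type*} [∀ s, CommRing (R s)]
    {K : Type*} [CommRing K] {D : Ultrafilter S} {π : (∀ s, R s) →+* K}
    (h : IsUltraproduct D π)
include h

theorem ae_congr {f g : ∀ s, R s} (hfg : {s | f s = g s} ∈ D) : π f = π g :=
  (h.2 f g).2 hfg

theorem eq_zero_iff {f : ∀ s, R s} : π f = 0 ↔ {s | f s = 0} ∈ D := by
  simpa using h.2 f 0

theorem ae_ne {f g : ∀ s, R s} (hfg : π f ≠ π g) : {s | f s ≠ g s} ∈ D := by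
  have := (h.2 f g).not.1 hfg
  rwa [← Ultrafilter.compl_mem_iff_notMem] at this

theorem ae_ne_zero {f : ∀ s, R s} (hf : π f ≠ 0) : {s | f s ≠ 0} ∈ D := by
  have : π f ≠ π 0 := by simpa using hf
  simpa using ae_ne h this

end Basic
section
variable {S : Type*} (D : Ultrafilter S)
  {k : S → Type*} [∀ s, Field (k s)] {K : Type*} [Field K]
  (πK : (∀ s, k s) →+* K)
  {L : S → Type*} [∀ s, Field (L s)] [∀ s, Algebra (RatFunc (k s)) (L s)]
  {M : Type*} [Field M] [Algebra (RatFunc K) M]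
  (πL : (∀ s, L s) →+* M)
  (σ : K → ∀ s, k s)

/-- componentwise lift of a polynomial over `K`, using a set-theoretic section `σ` of `πK`. -/
noncomputable def polyLift (N : ℕ) (q : K[X]) (s : S) : (k s)[X] :=
  ∑ j ∈ Finset.range (N + 1), C (σ (q.coeff j) s) * X ^ j

theorem liftA (hσ : ∀ a, πK (σ a) = a)
    (hC : ∀ f : ∀ s, k s,
      algebraMap (RatFunc K) M (RatFunc.C (πK f))
        = πL fun s => algebraMap (RatFunc (k s)) (L s) (RatFunc.C (f s)))
    (hX : algebraMap (RatFunc K) M RatFunc.X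
        = πL fun s => algebraMap (RatFunc (k s)) (L s) RatFunc.X)
    (N : ℕ) (q : K[X]) (hq : q.natDegree ≤ N) :
    πL (fun s => algebraMap (RatFunc (k s)) (L s)
        (algebraMap ((k s)[X]) (RatFunc (k s)) (polyLift σ N q s)))
      = algebraMap (RatFunc K) M (algebraMap K[X] (RatFunc K) q) := by
  have hrep : q = ∑ j ∈ Finset.range (N + 1), C (q.coeff j) * X ^ j := by
    simp_rw [C_mul_X_pow_eq_monomial]
    exact q.as_sum_range' (N + 1) (Nat.lt_succ_of_le hq)
  conv_rhs => rw [hrep]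
  rw [map_sum, map_sum]
  have hterm : ∀ j,
      algebraMap (RatFunc K) M (algebraMap K[X] (RatFunc K) (C (q.coeff j) * X ^ j))
        = πL ((fun s => algebraMap (RatFunc (k s)) (L s) (RatFunc.C (σ (q.coeff j) s)))
            * (fun s => algebraMap (RatFunc (k s)) (L s) RatFunc.X) ^ j) := by
    intro j
    have hC' : ∀ a : K, algebraMap (RatFunc K) M (RatFunc.C a)
        = πL fun s => algebraMap (RatFunc (k s)) (L s) (RatFunc.C (σ a s)) := by
      intro a; conv_lhs => rw [← hσ a]
      exact hC (σ a)
    rw [map_mul, map_pow, map_mul, map_pow, RatFunc.algebraMap_C, RatFunc.algebraMap_X,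
      map_mul πL, map_pow πL, ← hX, hC']
  simp_rw [hterm]
  rw [← map_sum πL]
  congr 1
  funext s
  simp only [Finset.sum_apply, Pi.mul_apply, Pi.pow_apply, polyLift, map_sum, map_mul, map_pow,
    RatFunc.algebraMap_C, RatFunc.algebraMap_X]

theorem coeff_polyLift (N : ℕ) (q : K[X]) (s : S) (i : ℕ) :
    (polyLift σ N q s).coeff i = if i ∈ Finset.range (N + 1) then σ (q.coeff i) s else 0 := by
  unfold polyLift
  simp_rw [C_mul_X_pow_eq_monomial]
  rw [finset_sum_coeff]
  simp_rw [coeff_monomial]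
  rw [Finset.sum_ite_eq' (Finset.range (N + 1)) i]

theorem liftB (hK : IsUltraproduct D πK) (hσ : ∀ a, πK (σ a) = a)
    (N : ℕ) (q : K[X]) (hq : q.natDegree ≤ N) (hq0 : q ≠ 0) :
    {s | polyLift σ N q s ≠ 0} ∈ D := by
  obtain ⟨j, hj⟩ : ∃ j, q.coeff j ≠ 0 := by
    by_contra h
    push_neg at h
    exact hq0 (Polynomial.ext fun i => by simp [h i])
  have hjN : j ∈ Finset.range (N + 1) := by
    refine Finset.mem_range.2 (Nat.lt_succ_of_le (le_trans ?_ hq))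
    exact le_natDegree_of_ne_zero hj
  have h1 : πK (σ (q.coeff j)) ≠ 0 := by rw [hσ]; exact hj
  have h2 : {s | σ (q.coeff j) s ≠ 0} ∈ D := by
    have : πK (σ (q.coeff j)) ≠ πK 0 := by simpa using h1
    have h3 := ((hK.2 (σ (q.coeff j)) 0).not.1 this)
    rwa [← Ultrafilter.compl_mem_iff_notMem] at h3
  refine D.toFilter.mem_of_superset h2 fun s hs => ?_
  intro h0
  apply hs
  have := coeff_polyLift σ N q s j
  rw [h0, if_pos hjN] at this
  simp only [coeff_zero] at this
  exact this.symm

/-- reconstruction of a componentwise family of polynomials of degree `≤ N`. -/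
noncomputable def reconPoly (N : ℕ) (q : ∀ s, (k s)[X]) : K[X] :=
  ∑ j ∈ Finset.range (N + 1), C (πK (fun s => (q s).coeff j)) * X ^ j

theorem natDegree_reconPoly_le (N : ℕ) (q : ∀ s, (k s)[X]) :
    (reconPoly πK N q).natDegree ≤ N := by
  refine natDegree_sum_le_of_forall_le _ _ fun j hj => ?_
  exact (natDegree_C_mul_X_pow_le _ _).trans (Nat.lt_succ_iff.mp (Finset.mem_range.mp hj))

theorem coeff_reconPoly (N : ℕ) (q : ∀ s, (k s)[X]) (i : ℕ) :
    (reconPoly πK N q).coeff i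
      = if i ∈ Finset.range (N + 1) then πK (fun s => (q s).coeff i) else 0 := by
  unfold reconPoly
  simp_rw [C_mul_X_pow_eq_monomial]
  rw [finset_sum_coeff]
  simp_rw [coeff_monomial]
  rw [Finset.sum_ite_eq' (Finset.range (N + 1)) i]

theorem liftE (hK : IsUltraproduct D πK) (hσ : ∀ a, πK (σ a) = a)
    (N : ℕ) (q : ∀ s, (k s)[X]) (hq : {s | (q s).natDegree ≤ N} ∈ D) :
    {s | polyLift σ N (reconPoly πK N q) s = q s} ∈ D := by
  have hcoeff : ∀ i ∈ Finset.range (N + 1),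
      {s | σ ((reconPoly πK N q).coeff i) s = (q s).coeff i} ∈ D := by
    intro i hi
    apply (hK.2 _ _).1
    rw [hσ, coeff_reconPoly πK N q i, if_pos hi]
  have hmem : (⋂ i ∈ (↑(Finset.range (N + 1)) : Set ℕ),
      {s | σ ((reconPoly πK N q).coeff i) s = (q s).coeff i}) ∈ D :=
    (Filter.biInter_mem (Finset.range (N + 1)).finite_toSet).2 fun i hi => hcoeff i hi
  refine D.toFilter.mem_of_superset (Filter.inter_mem hmem hq) fun s hs => ?_
  obtain ⟨hs1, hs2⟩ := hs
  simp only [Set.mem_iInter, Set.mem_setOf_eq] at hs1 hs2 ⊢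
  have hrepr : q s = ∑ j ∈ Finset.range (N + 1), C ((q s).coeff j) * X ^ j := by
    simp_rw [C_mul_X_pow_eq_monomial]
    exact (q s).as_sum_range' (N + 1) (Nat.lt_succ_of_le hs2)
  rw [hrepr]
  unfold polyLift
  exact Finset.sum_congr rfl fun j hj => by rw [hs1 j (Finset.mem_coe.2 hj)]


/-- componentwise lift of a rational function over `K`. -/
noncomputable def ratLift (r : RatFunc K) (s : S) : RatFunc (k s) :=
  algebraMap ((k s)[X]) (RatFunc (k s)) (polyLift σ r.num.natDegree r.num s)
    / algebraMap ((k s)[X]) (RatFunc (k s)) (polyLift σ r.denom.natDegree r.denom s)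

theorem liftC (hK : IsUltraproduct D πK) (hM : IsUltraproduct D πL)
    (hσ : ∀ a, πK (σ a) = a)
    (hC : ∀ f : ∀ s, k s,
      algebraMap (RatFunc K) M (RatFunc.C (πK f))
        = πL fun s => algebraMap (RatFunc (k s)) (L s) (RatFunc.C (f s)))
    (hX : algebraMap (RatFunc K) M RatFunc.X
        = πL fun s => algebraMap (RatFunc (k s)) (L s) RatFunc.X)
    (r : RatFunc K) :
    πL (fun s => algebraMap (RatFunc (k s)) (L s) (ratLift σ r s))
      = algebraMap (RatFunc K) M r := by
  have hG : {s | polyLift σ r.denom.natDegree r.denom s ≠ 0} ∈ D :=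
    liftB D πK σ hK hσ _ _ le_rfl (RatFunc.denom_ne_zero r)
  have key : πL (fun s => algebraMap (RatFunc (k s)) (L s) (ratLift σ r s))
      * πL (fun s => algebraMap (RatFunc (k s)) (L s)
          (algebraMap ((k s)[X]) (RatFunc (k s)) (polyLift σ r.denom.natDegree r.denom s)))
      = πL (fun s => algebraMap (RatFunc (k s)) (L s)
          (algebraMap ((k s)[X]) (RatFunc (k s)) (polyLift σ r.num.natDegree r.num s))) := by
    rw [← map_mul]
    apply (hM.2 _ _).2
    refine D.toFilter.mem_of_superset hG fun s hs => ?_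
    simp only [Set.mem_setOf_eq] at hs ⊢
    rw [Pi.mul_apply, ← map_mul]
    congr 1
    unfold ratLift
    rw [div_mul_cancel₀]
    exact fun h0 => hs ((map_eq_zero_iff _ (RatFunc.algebraMap_injective (k s))).1 h0)
  rw [liftA πK πL σ hσ hC hX _ _ le_rfl, liftA πK πL σ hσ hC hX _ _ le_rfl] at key
  have hden : algebraMap (RatFunc K) M (algebraMap K[X] (RatFunc K) r.denom) ≠ 0 := by
    intro h0
    rw [map_eq_zero_iff _ (algebraMap (RatFunc K) M).injective,
      map_eq_zero_iff _ (RatFunc.algebraMap_injective K)] at h0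
    exact RatFunc.denom_ne_zero r h0
  have hr : algebraMap (RatFunc K) M r
      * algebraMap (RatFunc K) M (algebraMap K[X] (RatFunc K) r.denom)
      = algebraMap (RatFunc K) M (algebraMap K[X] (RatFunc K) r.num) := by
    rw [← map_mul]
    congr 1
    nth_rewrite 1 [← RatFunc.num_div_denom r]
    rw [div_mul_cancel₀]
    rw [map_ne_zero_iff _ (RatFunc.algebraMap_injective K)]
    exact RatFunc.denom_ne_zero r
  exact mul_right_cancel₀ hden (key.trans hr.symm)


theorem natDegree_polyLift_le (N : ℕ) (q : K[X]) (s : S) :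
    (polyLift σ N q s).natDegree ≤ N := by
  refine natDegree_sum_le_of_forall_le _ _ fun j hj => ?_
  exact (natDegree_C_mul_X_pow_le _ _).trans (Nat.lt_succ_iff.mp (Finset.mem_range.mp hj))

theorem relAlgClosed (hK : IsUltraproduct D πK) (hM : IsUltraproduct D πL)
    (hσ : ∀ a, πK (σ a) = a)
    (hC : ∀ f : ∀ s, k s,
      algebraMap (RatFunc K) M (RatFunc.C (πK f))
        = πL fun s => algebraMap (RatFunc (k s)) (L s) (RatFunc.C (f s)))
    (hX : algebraMap (RatFunc K) M RatFunc.X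
        = πL fun s => algebraMap (RatFunc (k s)) (L s) RatFunc.X)
    (c : M) (u : ∀ s, RatFunc (k s))
    (hu : πL (fun s => algebraMap (RatFunc (k s)) (L s) (u s)) = c)
    (hc : IsIntegral (RatFunc K) c) :
    ∃ r : RatFunc K, algebraMap (RatFunc K) M r = c := by
  by_cases hc0 : c = 0
  · exact ⟨0, by simp [hc0]⟩
  set P : (RatFunc K)[X] := minpoly (RatFunc K) c with hPdef
  set n : ℕ := P.natDegree with hndef
  have hP0 : P.coeff 0 ≠ 0 := minpoly.coeff_zero_ne_zero hc hc0
  set δ : K[X] := ∏ j ∈ Finset.range (n + 1), (P.coeff j).denom with hδdef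
  set γ : ℕ → K[X] := fun j => (P.coeff j).num
      * ∏ j' ∈ (Finset.range (n + 1)).erase j, (P.coeff j').denom with hγdef
  have hnum : ∀ j, algebraMap K[X] (RatFunc K) (P.coeff j).num
      = P.coeff j * algebraMap K[X] (RatFunc K) (P.coeff j).denom := by
    intro j
    have hden0 : algebraMap K[X] (RatFunc K) (P.coeff j).denom ≠ 0 := by
      rw [map_ne_zero_iff _ (RatFunc.algebraMap_injective K)]
      exact RatFunc.denom_ne_zero _
    rw [← div_eq_iff hden0]
    exact RatFunc.num_div_denom _
  have hγ : ∀ j ∈ Finset.range (n + 1),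
      algebraMap K[X] (RatFunc K) (γ j) = P.coeff j * algebraMap K[X] (RatFunc K) δ := by
    intro j hj
    rw [hγdef, hδdef]
    rw [map_mul, hnum j, ← Finset.mul_prod_erase _ _ hj, map_mul]
    ring
  have hγ0 : γ 0 ≠ 0 := by
    refine mul_ne_zero (RatFunc.num_ne_zero hP0) ?_
    exact Finset.prod_ne_zero_iff.2 fun j' _ => RatFunc.denom_ne_zero _
  set N : ℕ := (Finset.range (n + 1)).sup fun j => (γ j).natDegree with hNdef
  have hNj : ∀ j ∈ Finset.range (n + 1), (γ j).natDegree ≤ N := by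
    intro j hj
    rw [hNdef]
    exact Finset.le_sup (f := fun j => (γ j).natDegree) hj
  -- the evaluation identity in M
  have hz : ∑ j ∈ Finset.range (n + 1), algebraMap (RatFunc K) M (P.coeff j) * c ^ j = 0 := by
    have h := minpoly.aeval (RatFunc K) c
    rw [aeval_eq_sum_range] at h
    simpa [Algebra.smul_def] using h
  have hev : ∑ j ∈ Finset.range (n + 1),
      algebraMap (RatFunc K) M (algebraMap K[X] (RatFunc K) (γ j)) * c ^ j = 0 := by
    calc ∑ j ∈ Finset.range (n + 1),
        algebraMap (RatFunc K) M (algebraMap K[X] (RatFunc K) (γ j)) * c ^ j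
        = ∑ j ∈ Finset.range (n + 1), algebraMap (RatFunc K) M (algebraMap K[X] (RatFunc K) δ)
            * (algebraMap (RatFunc K) M (P.coeff j) * c ^ j) := by
          refine Finset.sum_congr rfl fun j hj => ?_
          rw [hγ j hj, map_mul]
          ring
      _ = algebraMap (RatFunc K) M (algebraMap K[X] (RatFunc K) δ)
            * ∑ j ∈ Finset.range (n + 1), algebraMap (RatFunc K) M (P.coeff j) * c ^ j := by
          rw [Finset.mul_sum]
      _ = 0 := by rw [hz, mul_zero]
  -- transfer to components
  have hev2 : πL (fun s => ∑ j ∈ Finset.range (n + 1),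
      algebraMap (RatFunc (k s)) (L s)
        (algebraMap ((k s)[X]) (RatFunc (k s)) (polyLift σ N (γ j) s))
      * algebraMap (RatFunc (k s)) (L s) (u s) ^ j) = 0 := by
    have hfun : (fun s => ∑ j ∈ Finset.range (n + 1),
        algebraMap (RatFunc (k s)) (L s)
          (algebraMap ((k s)[X]) (RatFunc (k s)) (polyLift σ N (γ j) s))
        * algebraMap (RatFunc (k s)) (L s) (u s) ^ j)
        = ∑ j ∈ Finset.range (n + 1),
            (fun s => algebraMap (RatFunc (k s)) (L s)
              (algebraMap ((k s)[X]) (RatFunc (k s)) (polyLift σ N (γ j) s)))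
            * (fun s => algebraMap (RatFunc (k s)) (L s) (u s)) ^ j := by
      funext s
      simp [Finset.sum_apply, Pi.mul_apply, Pi.pow_apply]
    rw [hfun, map_sum]
    have : ∀ j ∈ Finset.range (n + 1),
        πL ((fun s => algebraMap (RatFunc (k s)) (L s)
              (algebraMap ((k s)[X]) (RatFunc (k s)) (polyLift σ N (γ j) s)))
            * (fun s => algebraMap (RatFunc (k s)) (L s) (u s)) ^ j)
          = algebraMap (RatFunc K) M (algebraMap K[X] (RatFunc K) (γ j)) * c ^ j := by
      intro j hj
      rw [map_mul, map_pow, liftA πK πL σ hσ hC hX N (γ j) (hNj j hj), hu]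
    rw [Finset.sum_congr rfl this, hev]
  have hGρ : {s | ∑ j ∈ Finset.range (n + 1),
      algebraMap ((k s)[X]) (RatFunc (k s)) (polyLift σ N (γ j) s) * u s ^ j = 0} ∈ D := by
    refine D.toFilter.mem_of_superset ((eq_zero_iff hM).1 hev2) fun s hs => ?_
    simp only [Set.mem_setOf_eq] at hs ⊢
    apply (algebraMap (RatFunc (k s)) (L s)).injective
    rw [map_sum, map_zero]
    simpa [map_mul, map_pow] using hs
  have hG0 : {s | polyLift σ N (γ 0) s ≠ 0} ∈ D :=
    liftB D πK σ hK hσ N (γ 0) (hNj 0 (Finset.mem_range.2 (Nat.succ_pos n))) hγ0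
  -- degree bounds on numerators and denominators
  have hGbound : {s | (IsFractionRing.num ((k s)[X]) (u s)).natDegree ≤ N
      ∧ ((IsFractionRing.den ((k s)[X]) (u s) : (k s)[X])).natDegree ≤ N} ∈ D := by
    refine D.toFilter.mem_of_superset (Filter.inter_mem hGρ hG0) fun s hs => ?_
    obtain ⟨hs1, hs2⟩ := hs
    simp only [Set.mem_setOf_eq] at hs1 hs2 ⊢
    set Q : ((k s)[X])[X] := ∑ j ∈ Finset.range (n + 1), C (polyLift σ N (γ j) s) * X ^ j
      with hQdef
    have hQcoeff : ∀ i, Q.coeff i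
        = if i ∈ Finset.range (n + 1) then polyLift σ N (γ i) s else 0 := by
      intro i
      rw [hQdef]
      simp_rw [C_mul_X_pow_eq_monomial]
      rw [finset_sum_coeff]
      simp_rw [coeff_monomial]
      rw [Finset.sum_ite_eq' (Finset.range (n + 1)) i]
    have hQ0 : Q.coeff 0 = polyLift σ N (γ 0) s := by
      rw [hQcoeff 0, if_pos (Finset.mem_range.2 (Nat.succ_pos n))]
    have hQev : aeval (u s) Q = 0 := by
      rw [hQdef, map_sum]
      simpa [aeval_C, map_mul, map_pow] using hs1
    have hQne : Q ≠ 0 := fun h => hs2 (by rw [← hQ0, h, coeff_zero])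
    constructor
    · have hdvd := num_dvd_of_is_root hQev
      rw [hQ0] at hdvd
      exact (natDegree_le_of_dvd hdvd hs2).trans (natDegree_polyLift_le σ N (γ 0) s)
    · have hdvd := den_dvd_of_is_root hQev
      have hlc : Q.leadingCoeff ≠ 0 := leadingCoeff_ne_zero.2 hQne
      refine (natDegree_le_of_dvd hdvd hlc).trans ?_
      rw [leadingCoeff, hQcoeff]
      split
      · exact natDegree_polyLift_le σ N _ s
      · simp
  -- reconstruct the numerator and denominator over K
  set A : K[X] := reconPoly πK N (fun s => IsFractionRing.num ((k s)[X]) (u s)) with hAdef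
  set B : K[X] := reconPoly πK N
      (fun s => (IsFractionRing.den ((k s)[X]) (u s) : (k s)[X])) with hBdef
  have hnumA : {s | (IsFractionRing.num ((k s)[X]) (u s)).natDegree ≤ N} ∈ D :=
    D.toFilter.mem_of_superset hGbound fun s hs => hs.1
  have hnumB : {s | ((IsFractionRing.den ((k s)[X]) (u s) : (k s)[X])).natDegree ≤ N} ∈ D :=
    D.toFilter.mem_of_superset hGbound fun s hs => hs.2
  have hBne : B ≠ 0 := by
    intro hB0
    have hco : ∀ i ∈ (↑(Finset.range (N + 1)) : Set ℕ),
        {s | (IsFractionRing.den ((k s)[X]) (u s) : (k s)[X]).coeff i = 0} ∈ D := by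
      intro i hi
      apply (eq_zero_iff hK).1
      have hthis := coeff_reconPoly πK N
        (fun s => (IsFractionRing.den ((k s)[X]) (u s) : (k s)[X])) i
      rw [← hBdef, hB0, coeff_zero, if_pos (Finset.mem_coe.1 hi)] at hthis
      exact hthis.symm
    have hmem : (⋂ i ∈ (↑(Finset.range (N + 1)) : Set ℕ),
        {s | (IsFractionRing.den ((k s)[X]) (u s) : (k s)[X]).coeff i = 0}) ∈ D :=
      (Filter.biInter_mem (Finset.range (N + 1)).finite_toSet).2 hco
    obtain ⟨s, hs1, hs2⟩ := Ultrafilter.nonempty_of_mem (Filter.inter_mem hmem hnumB)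
    simp only [Set.mem_iInter, Set.mem_setOf_eq] at hs1 hs2
    have hzero : (IsFractionRing.den ((k s)[X]) (u s) : (k s)[X]) = 0 := by
      rw [(IsFractionRing.den ((k s)[X]) (u s) : (k s)[X]).as_sum_range' (N + 1)
        (Nat.lt_succ_of_le hs2)]
      refine Finset.sum_eq_zero fun i hi => ?_
      rw [hs1 i (Finset.mem_coe.2 hi), monomial_zero_right]
    exact nonZeroDivisors.coe_ne_zero _ hzero
  have hApoint := liftE D πK σ hK hσ N _ hnumA
  have hBpoint := liftE D πK σ hK hσ N _ hnumB
  have hBM : algebraMap (RatFunc K) M (algebraMap K[X] (RatFunc K) B) ≠ 0 := by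
    rw [map_ne_zero_iff _ (algebraMap (RatFunc K) M).injective,
      map_ne_zero_iff _ (RatFunc.algebraMap_injective K)]
    exact hBne
  have hc1 : c * algebraMap (RatFunc K) M (algebraMap K[X] (RatFunc K) B)
      = algebraMap (RatFunc K) M (algebraMap K[X] (RatFunc K) A) := by
    rw [← hu, ← liftA πK πL σ hσ hC hX N B (natDegree_reconPoly_le πK N _),
      ← liftA πK πL σ hσ hC hX N A (natDegree_reconPoly_le πK N _), ← map_mul]
    apply ae_congr hM
    refine D.toFilter.mem_of_superset (Filter.inter_mem hApoint hBpoint) fun s hs => ?_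
    obtain ⟨hs1, hs2⟩ := hs
    simp only [Set.mem_setOf_eq] at hs1 hs2 ⊢
    rw [Pi.mul_apply]
    rw [hs1, hs2, ← map_mul]
    congr 1
    have hden0 : algebraMap ((k s)[X]) (RatFunc (k s))
        (IsFractionRing.den ((k s)[X]) (u s) : (k s)[X]) ≠ 0 := by
      rw [map_ne_zero_iff _ (RatFunc.algebraMap_injective (k s))]
      exact nonZeroDivisors.coe_ne_zero _
    nth_rewrite 1 [← IsFractionRing.mk'_num_den' ((k s)[X]) (u s)]
    rw [div_mul_cancel₀ _ hden0]
  refine ⟨algebraMap K[X] (RatFunc K) A / algebraMap K[X] (RatFunc K) B, ?_⟩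
  rw [map_div₀, ← hc1]
  exact mul_div_cancel_right₀ c hBM


end

/-- If `L s` is a Galois extension of `k_s(t)` for `D`-almost all `s`, then the algebraic
part of the ultraproduct `M` (the maximal algebraic subextension `algebraicClosure F M`
of `M` over `F = K(t)`) is a Galois extension of `F`. -/
theorem stmt_14 {S : Type*} [Infinite S] (D : Ultrafilter S) (hD : ∀ s : S, D ≠ pure s)
    (k : S → Type*) [∀ s, Field (k s)] (K : Type*) [Field K]
    (πK : (∀ s, k s) →+* K) (hK : IsUltraproduct D πK)
    (L : S → Type*) [∀ s, Field (L s)] [∀ s, Algebra (RatFunc (k s)) (L s)]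
    (hGal : {s | IsGalois (RatFunc (k s)) (L s)} ∈ D)
    (M : Type*) [Field M] [Algebra (RatFunc K) M]
    (πL : (∀ s, L s) →+* M) (hM : IsUltraproduct D πL)
    (hC : ∀ f : ∀ s, k s,
      algebraMap (RatFunc K) M (RatFunc.C (πK f))
        = πL fun s => algebraMap (RatFunc (k s)) (L s) (RatFunc.C (f s)))
    (hX : algebraMap (RatFunc K) M RatFunc.X
        = πL fun s => algebraMap (RatFunc (k s)) (L s) RatFunc.X) :
    IsGalois (RatFunc K) ↥(algebraicClosure (RatFunc K) M) := by
  classical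
  obtain ⟨σ, hσ⟩ : ∃ σ : K → ∀ s, k s, ∀ a, πK (σ a) = a :=
    ⟨fun a => (hK.1 a).choose, fun a => (hK.1 a).choose_spec⟩
  have key : ∀ x : M, IsIntegral (RatFunc K) x →
      (minpoly (RatFunc K) x).Separable ∧
      Splits ((minpoly (RatFunc K) x).map
        (algebraMap (RatFunc K) ↥(algebraicClosure (RatFunc K) M))) := by
    intro x hx
    obtain ⟨f, hf⟩ := hM.1 x
    set p : (RatFunc K)[X] := minpoly (RatFunc K) x with hpdef
    set n : ℕ := p.natDegree with hndef
    have hn1 : 0 < n := minpoly.natDegree_pos hx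
    set pt : ∀ s, (RatFunc (k s))[X] := fun s =>
      X ^ n + ∑ j ∈ Finset.range n, C (ratLift σ (p.coeff j) s) * X ^ j with hptdef
    have hsumdeg : ∀ s, (∑ j ∈ Finset.range n,
        C (ratLift σ (p.coeff j) s) * X ^ j).degree < (n : WithBot ℕ) := by
      intro s
      refine lt_of_le_of_lt (degree_sum_le _ _) ?_
      rw [Finset.sup_lt_iff (by exact_mod_cast WithBot.bot_lt_coe n)]
      intro j hj
      refine lt_of_le_of_lt (degree_C_mul_X_pow_le _ _) ?_
      exact_mod_cast Finset.mem_range.1 hj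
    have hptmonic : ∀ s, (pt s).Monic := fun s => monic_X_pow_add (hsumdeg s)
    have hptdeg : ∀ s, (pt s).natDegree = n := by
      intro s
      have : (pt s).degree = (n : WithBot ℕ) := by
        rw [hptdef]
        rw [degree_add_eq_left_of_degree_lt (by rw [degree_X_pow]; exact hsumdeg s),
          degree_X_pow]
      exact natDegree_eq_of_degree_eq_some this
    -- transfer of evaluation
    have haeval : ∀ w : ∀ s, L s,
        aeval (πL w) p = πL (fun s => aeval (w s) (pt s)) := by
      intro w
      have hcomp : (fun s => aeval (w s) (pt s))
          = w ^ n + ∑ j ∈ Finset.range n,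
              (fun s => algebraMap (RatFunc (k s)) (L s) (ratLift σ (p.coeff j) s)) * w ^ j := by
        funext s
        simp only [hptdef, map_add, map_pow, aeval_X, map_sum, map_mul, aeval_C,
          Pi.add_apply, Pi.pow_apply, Finset.sum_apply, Pi.mul_apply]
      rw [hcomp, map_add, map_pow, map_sum]
      have hterm : ∀ j ∈ Finset.range n,
          πL ((fun s => algebraMap (RatFunc (k s)) (L s) (ratLift σ (p.coeff j) s)) * w ^ j)
            = algebraMap (RatFunc K) M (p.coeff j) * (πL w) ^ j := by
        intro j _
        rw [map_mul, map_pow, liftC D πK πL σ hK hM hσ hC hX (p.coeff j)]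
      rw [Finset.sum_congr rfl hterm]
      have hae : aeval (πL w) p = ∑ j ∈ Finset.range (n + 1),
          algebraMap (RatFunc K) M (p.coeff j) * (πL w) ^ j := by
        rw [aeval_eq_sum_range]
        exact Finset.sum_congr rfl fun j _ => by rw [Algebra.smul_def]
      rw [hae, Finset.sum_range_succ]
      have hcn : p.coeff n = 1 := by
        rw [hndef]
        exact (minpoly.monic hx).coeff_natDegree
      rw [hcn, map_one, one_mul, add_comm]
    -- f s is almost everywhere a root of pt s
    have hroot : {s | aeval (f s) (pt s) = 0} ∈ D := by
      apply (eq_zero_iff hM).1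
      rw [← haeval f, hf]
      exact minpoly.aeval (RatFunc K) x
    have hG0 : ({s | aeval (f s) (pt s) = 0}
        ∩ {s | IsGalois (RatFunc (k s)) (L s)}) ∈ D := Filter.inter_mem hroot hGal
    set G0 := {s | aeval (f s) (pt s) = 0} ∩ {s | IsGalois (RatFunc (k s)) (L s)} with hG0def
    have hint : ∀ s ∈ G0, IsIntegral (RatFunc (k s)) (f s) := by
      intro s hs
      exact ⟨pt s, hptmonic s, by rw [← aeval_def]; exact hs.1⟩
    set ms : ∀ s, (RatFunc (k s))[X] := fun s => minpoly (RatFunc (k s)) (f s) with hmsdef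
    have hmdvd : ∀ s ∈ G0, ms s ∣ pt s := fun s hs => minpoly.dvd _ _ hs.1
    have hmdeg : ∀ s ∈ G0, (ms s).natDegree ≤ n := by
      intro s hs
      rw [← hptdeg s]
      exact natDegree_le_of_dvd (hmdvd s hs) (hptmonic s).ne_zero
    -- fix the common degree d
    have hcover : G0 ⊆ ⋃ e ∈ (↑(Finset.range (n + 1)) : Set ℕ), {s | (ms s).natDegree = e} := by
      intro s hs
      simp only [Set.mem_iUnion, Set.mem_setOf_eq, Finset.coe_range, Set.mem_Iio]
      exact ⟨(ms s).natDegree, Nat.lt_succ_of_le (hmdeg s hs), rfl⟩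
    obtain ⟨d, -, hd⟩ := (Ultrafilter.finite_biUnion_mem_iff
      (Finset.range (n + 1)).finite_toSet).1 (D.toFilter.mem_of_superset hG0 hcover)
    have hG1 : (G0 ∩ {s | (ms s).natDegree = d}) ∈ D := Filter.inter_mem hG0 hd
    set G1 := G0 ∩ {s | (ms s).natDegree = d} with hG1def
    -- basic properties on G1
    have hsplit : ∀ s ∈ G1, Splits ((ms s).map (algebraMap (RatFunc (k s)) (L s))) := by
      intro s hs
      haveI : IsGalois (RatFunc (k s)) (L s) := hs.1.2
      exact Normal.splits inferInstance (f s)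
    have hsep : ∀ s ∈ G1, (ms s).Separable := by
      intro s hs
      haveI : IsGalois (RatFunc (k s)) (L s) := hs.1.2
      exact Algebra.IsSeparable.isSeparable _ (f s)
    set ρ : ∀ s, Multiset (L s) := fun s =>
      ((ms s).map (algebraMap (RatFunc (k s)) (L s))).roots with hρdef
    have hlen : ∀ s ∈ G1, (ρ s).toList.length = d := by
      intro s hs
      rw [Multiset.length_toList, hρdef]
      exact ((hsplit s hs).natDegree_eq_card_roots.symm.trans ((natDegree_map _).trans hs.2))
    set r : ∀ s, Fin d → L s := fun s i =>
      if h : (ρ s).toList.length = d then (ρ s).toList.get ⟨i.1, by rw [h]; exact i.2⟩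
      else 0 with hrdef
    have hrget : ∀ s (hs : s ∈ G1) (i : Fin d),
        r s i = (ρ s).toList.get ⟨i.1, by rw [hlen s hs]; exact i.2⟩ := by
      intro s hs i
      rw [hrdef]
      simp only [hlen s hs, dif_pos]
    have hnodup : ∀ s ∈ G1, (ρ s).toList.Nodup := by
      intro s hs
      rw [← Multiset.coe_nodup, Multiset.coe_toList]
      exact nodup_roots ((hsep s hs).map)
    have hrinj : ∀ s ∈ G1, ∀ i j : Fin d, r s i = r s j → i = j := by
      intro s hs i j hij
      rw [hrget s hs i, hrget s hs j] at hij
      have h2 := (List.nodup_iff_injective_get.1 (hnodup s hs)) hij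
      have h3 := congrArg Fin.val h2
      exact Fin.ext h3
    have hprod : ∀ s ∈ G1, (ms s).map (algebraMap (RatFunc (k s)) (L s))
        = ∏ i : Fin d, (X - C (r s i)) := by
      intro s hs
      have h1 := (hsplit s hs).eq_prod_roots_of_monic
        ((minpoly.monic (hint s hs.1)).map _)
      have e1 : (map (algebraMap (RatFunc (k s)) (L s))
          (minpoly (RatFunc (k s)) (f s))).roots = ρ s := rfl
      rw [h1, e1]
      conv_lhs => rw [← Multiset.coe_toList (ρ s)]
      rw [Multiset.map_coe, Multiset.prod_coe]
      have h2 : (ρ s).toList = List.ofFn (fun i : Fin d => r s i) := by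
        refine List.ext_get (by rw [List.length_ofFn, hlen s hs]) fun i h1' h2' => ?_
        rw [List.get_ofFn, hrget s hs]
        congr 1
      conv_lhs => rw [h2]
      rw [List.map_ofFn, List.prod_ofFn]
      rfl
    -- global objects
    set y : Fin d → M := fun i => πL (fun s => r s i) with hydef
    set g : ((∀ s, L s))[X] := ∏ i : Fin d, (X - C (fun s => r s i)) with hgdef
    set m : M[X] := g.map πL with hmdef
    have hmprod : m = ∏ i : Fin d, (X - C (y i)) := by
      rw [hmdef, hgdef, Polynomial.map_prod]
      simp only [Polynomial.map_sub, map_X, map_C]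
      rfl
    have hgcomp : ∀ s ∈ G1, ∀ j, g.coeff j s
        = algebraMap (RatFunc (k s)) (L s) ((ms s).coeff j) := by
      intro s hs j
      have h1 : g.coeff j s = (g.map (Pi.evalRingHom L s)).coeff j := by
        rw [coeff_map]; rfl
      rw [h1, hgdef, Polynomial.map_prod]
      simp only [Polynomial.map_sub, map_X, map_C]
      have h5 : (∏ i : Fin d, (X - C ((Pi.evalRingHom L s) fun s' => r s' i)))
          = ∏ i : Fin d, (X - C (r s i)) := rfl
      rw [h5, ← hprod s hs, coeff_map]
    have hcoeffm : ∀ j, m.coeff j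
        = πL (fun s => algebraMap (RatFunc (k s)) (L s) ((ms s).coeff j)) := by
      intro j
      rw [hmdef, coeff_map]
      apply ae_congr hM
      exact D.toFilter.mem_of_superset hG1 fun s hs => hgcomp s hs j
    -- x is one of the roots
    have hfs : G1 ⊆ ⋃ i ∈ (Set.univ : Set (Fin d)), {s | f s = r s i} := by
      intro s hs
      have hz : aeval (f s) (ms s) = 0 := minpoly.aeval _ _
      have hmem : f s ∈ ρ s := by
        rw [hρdef]
        rw [mem_roots ((minpoly.monic (hint s hs.1)).map
          (algebraMap (RatFunc (k s)) (L s))).ne_zero]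
        rw [IsRoot.def, eval_map, ← aeval_def]
        exact hz
      rw [← Multiset.mem_toList] at hmem
      obtain ⟨i, hi⟩ := List.mem_iff_get.1 hmem
      have hid : i.1 < d := by rw [← hlen s hs]; exact i.2
      simp only [Set.mem_iUnion, Set.mem_setOf_eq]
      refine ⟨⟨i.1, hid⟩, trivial, ?_⟩
      rw [hrget s hs ⟨i.1, hid⟩, ← hi]
    obtain ⟨i₀, -, hi₀⟩ := (Ultrafilter.finite_biUnion_mem_iff
      (Set.finite_univ)).1 (D.toFilter.mem_of_superset hG1 hfs)
    have hxy : x = y i₀ := by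
      rw [← hf, hydef]
      exact ae_congr hM hi₀
    -- the y i are pairwise distinct
    have hyinj : ∀ i j : Fin d, y i = y j → i = j := by
      intro i j hij
      by_contra hne
      have hset : {s | r s i = r s j} ∈ D := (hM.2 _ _).1 hij
      obtain ⟨s, hs1, hs2⟩ := Ultrafilter.nonempty_of_mem (Filter.inter_mem hset hG1)
      exact hne (hrinj s hs2 i j hs1)
    -- the y i are algebraic over F
    have hy_root : ∀ i, aeval (y i) p = 0 := by
      intro i
      have h0 : y i = πL (fun s => r s i) := rfl
      rw [h0, haeval (fun s => r s i)]
      apply (eq_zero_iff hM).2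
      refine D.toFilter.mem_of_superset hG1 fun s hs => ?_
      simp only [Set.mem_setOf_eq]
      obtain ⟨q, hq⟩ := hmdvd s hs.1
      have hri : aeval (r s i) (ms s) = 0 := by
        have hmem : r s i ∈ ρ s := by
          rw [hrget s hs i]
          exact Multiset.mem_toList.1 (List.get_mem _ _)
        have h2 := (mem_roots ((minpoly.monic (hint s hs.1)).map
          (algebraMap (RatFunc (k s)) (L s))).ne_zero).1 hmem
        rwa [IsRoot.def, eval_map, ← aeval_def] at h2
      rw [hq, map_mul, hri, zero_mul]
    have hy_int : ∀ i, IsIntegral (RatFunc K) (y i) :=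
      fun i => ⟨p, minpoly.monic hx, by rw [← aeval_def]; exact hy_root i⟩
    set yhat : Fin d → ↥(algebraicClosure (RatFunc K) M) :=
      fun i => ⟨y i, mem_algebraicClosure_iff'.2 (hy_int i)⟩ with hyhatdef
    set mhat : (↥(algebraicClosure (RatFunc K) M))[X] :=
      ∏ i : Fin d, (X - C (yhat i)) with hmhatdef
    have hmhat : mhat.map (algebraMap ↥(algebraicClosure (RatFunc K) M) M) = m := by
      rw [hmhatdef, Polynomial.map_prod, hmprod]
      simp only [Polynomial.map_sub, map_X, map_C]
      rfl
    have hlifts : ∀ j, m.coeff j ∈ Set.range (algebraMap (RatFunc K) M) := by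
      intro j
      have hintc : IsIntegral (RatFunc K) (m.coeff j) := by
        have h1 : m.coeff j
            = algebraMap ↥(algebraicClosure (RatFunc K) M) M (mhat.coeff j) := by
          rw [← hmhat, coeff_map]
        rw [h1]
        exact (mhat.coeff j).2
      obtain ⟨r', hr'⟩ := relAlgClosed D πK πL σ hK hM hσ hC hX (m.coeff j)
        (fun s => (ms s).coeff j) (hcoeffm j).symm hintc
      exact ⟨r', hr'⟩
    have hmmonic : m.Monic := by
      rw [hmprod]
      exact monic_prod_of_monic _ _ fun i _ => monic_X_sub_C _
    obtain ⟨μ, hμmap, hμdeg, hμmonic⟩ :=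
      lifts_and_degree_eq_and_monic ((lifts_iff_coeff_lifts m).2 hlifts) hmmonic
    have hμroot : aeval x μ = 0 := by
      rw [aeval_def, ← eval_map, hμmap, hmprod, eval_prod]
      refine Finset.prod_eq_zero (Finset.mem_univ i₀) ?_
      simp [hxy]
    have hpdvd : p ∣ μ := minpoly.dvd _ _ hμroot
    have hdm : m.natDegree = d := by
      rw [hmprod, natDegree_prod _ _ (fun i _ => X_sub_C_ne_zero (y i))]
      simp [natDegree_X_sub_C]
    have hμd : μ.natDegree = d := by
      rw [← hdm]
      exact natDegree_eq_of_degree_eq hμdeg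
    have hnd : n ≤ d := by
      have h1 := natDegree_le_of_dvd hpdvd hμmonic.ne_zero
      rwa [hμd] at h1
    have hdn : d ≤ n := by
      obtain ⟨s0, hs0⟩ := Ultrafilter.nonempty_of_mem hG1
      rw [← hs0.2]
      exact hmdeg s0 hs0.1
    have hμp : μ = p := by
      obtain ⟨q, hq⟩ := hpdvd
      have hq0 : q ≠ 0 := fun h => hμmonic.ne_zero (by rw [hq, h, mul_zero])
      have hdeg : q.natDegree = 0 := by
        have h2 := natDegree_mul (minpoly.ne_zero hx) hq0
        rw [← hq, hμd] at h2
        have h5 : d = p.natDegree := (le_antisymm hdn hnd).trans hndef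
        have h6 : p.natDegree + q.natDegree = p.natDegree + 0 := by
          rw [add_zero]
          conv_rhs => rw [← h5]
          exact h2.symm
        exact Nat.add_left_cancel h6
      have hqc : q = C (q.coeff 0) := eq_C_of_natDegree_eq_zero hdeg
      have hone : q.coeff 0 = 1 := by
        have h2 : (p * q).leadingCoeff = 1 := by rw [← hq]; exact hμmonic
        rw [leadingCoeff_mul, (minpoly.monic hx).leadingCoeff, one_mul,
          leadingCoeff, hdeg] at h2
        exact h2
      rw [hq, hqc, hone, map_one, mul_one]
    have hpmap : p.map (algebraMap (RatFunc K) M) = ∏ i : Fin d, (X - C (y i)) := by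
      rw [← hμp, hμmap, hmprod]
    constructor
    · rw [← separable_map (algebraMap (RatFunc K) M), hpmap]
      exact separable_prod_X_sub_C_iff'.2 fun i _ j _ hij => hyinj i j hij
    · have hmapeq : p.map (algebraMap (RatFunc K) ↥(algebraicClosure (RatFunc K) M))
          = mhat := by
        apply Polynomial.map_injective (algebraMap ↥(algebraicClosure (RatFunc K) M) M)
          (algebraMap ↥(algebraicClosure (RatFunc K) M) M).injective
        rw [Polynomial.map_map, ← IsScalarTower.algebraMap_eq, hpmap, hmhat, hmprod]
      rw [hmapeq, hmhatdef]
      exact Splits.prod fun i _ => Splits.X_sub_C _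
  -- assemble the Galois property
  have hsep : Algebra.IsSeparable (RatFunc K) ↥(algebraicClosure (RatFunc K) M) := by
    constructor
    intro x
    have hint : IsIntegral (RatFunc K)
        (algebraMap ↥(algebraicClosure (RatFunc K) M) M x) := x.2
    have h1 := (key _ hint).1
    rwa [minpoly.algebraMap_eq
      (algebraMap ↥(algebraicClosure (RatFunc K) M) M).injective x] at h1
  have hnormal : Normal (RatFunc K) ↥(algebraicClosure (RatFunc K) M) := by
    rw [normal_iff]
    intro x
    have hint : IsIntegral (RatFunc K)
        (algebraMap ↥(algebraicClosure (RatFunc K) M) M x) := x.2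
    have hint' : IsIntegral (RatFunc K) x := by
      rwa [isIntegral_algebraMap_iff
        (algebraMap ↥(algebraicClosure (RatFunc K) M) M).injective] at hint
    refine ⟨hint', ?_⟩
    have h2 := (key _ hint).2
    rwa [minpoly.algebraMap_eq
      (algebraMap ↥(algebraicClosure (RatFunc K) M) M).injective x] at h2
  haveI := hsep
  haveI := hnormal
  constructor
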